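/- The box B = [−1/d, 1/d] × [−1, kₛ/d⁴] is forward invariant for the S-NOD dynamics: if z, s : ℝ → ℝ are differentiable functions satisfying z′(t) = −d·z(t) + tanh(a·z(t)·(k·z(t)² + μ₀ − s(t)) + b) and s′(t) = ε·(−s(t) + kₛ·z(t)⁴) for all t, and (z(0), s(0)) ∈ B, then (z(t), s(t)) ∈ B for all t ≥ 0. -/

import Mathlib

private lemma my_tanh_le_one (x : ℝ) : Real.tanh x ≤ 1 := by
  rw [Real.tanh_eq_sinh_div_cosh, div_le_one (Real.cosh_pos x), Real.sinh_eq, Real.cosh_eq]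
  have := Real.exp_pos (-x)
  linarith

private lemma my_neg_one_le_tanh (x : ℝ) : -1 ≤ Real.tanh x := by
  rw [Real.tanh_eq_sinh_div_cosh, le_div_iff₀ (Real.cosh_pos x), Real.sinh_eq, Real.cosh_eq]
  have := Real.exp_pos x
  linarith

/-- If a differentiable function has nonpositive derivative on `[0,∞)` and starts
nonpositive, it stays nonpositive. -/
private lemma stays_nonpos (f f' : ℝ → ℝ)
    (hf : ∀ t, HasDerivAt f (f' t) t)
    (hle : ∀ t, 0 ≤ t → f' t ≤ 0) (h0 : f 0 ≤ 0) :
    ∀ t, 0 ≤ t → f t ≤ 0 := by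
  intro t ht
  have hanti : AntitoneOn f (Set.Ici (0 : ℝ)) := by
    apply antitoneOn_of_deriv_nonpos (convex_Ici 0)
    · exact (Differentiable.continuous (fun x => (hf x).differentiableAt)).continuousOn
    · intro x hx
      exact ((hf x).differentiableAt).differentiableWithinAt
    · intro x hx
      rw [(hf x).deriv]
      exact hle x (le_of_lt (by simpa using hx))
  calc f t ≤ f 0 := hanti (by simp) (by simpa using ht) ht
    _ ≤ 0 := h0

/-- The box `B = [−1/d, 1/d] × [−1, kₛ/d⁴]` is forward invariant
for the S-NOD dynamics: if `z, s : ℝ → ℝ` are differentiable functions satisfying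
`z′(t) = −d·z(t) + tanh(a·z(t)·(k·z(t)² + μ₀ − s(t)) + b)` and
`s′(t) = ε·(−s(t) + kₛ·z(t)⁴)` for all `t`, and `(z(0), s(0)) ∈ B`, then
`(z(t), s(t)) ∈ B` for all `t ≥ 0`. -/
theorem snod_box_forward_invariant
    (a d k ks ε μ0 b : ℝ)
    (ha : 0 < a) (hd : 0 < d) (hk : 0 < k) (hks : 0 < ks) (hε : 0 < ε) (hμ0 : 0 < μ0)
    (z s : ℝ → ℝ)
    (hz : ∀ t : ℝ, HasDerivAt z
      (-d * z t + Real.tanh (a * z t * (k * z t ^ 2 + μ0 - s t) + b)) t)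
    (hs : ∀ t : ℝ, HasDerivAt s (ε * (-s t + ks * z t ^ 4)) t)
    (h0 : (z 0, s 0) ∈ Set.Icc (-(1 / d)) (1 / d) ×ˢ Set.Icc (-1 : ℝ) (ks / d ^ 4)) :
    ∀ t : ℝ, 0 ≤ t →
      (z t, s t) ∈ Set.Icc (-(1 / d)) (1 / d) ×ˢ Set.Icc (-1 : ℝ) (ks / d ^ 4) := by
  simp only [Set.prodMk_mem_set_prod_eq, Set.mem_Icc] at h0
  obtain ⟨⟨hz0l, hz0u⟩, hs0l, hs0u⟩ := h0
  set T : ℝ → ℝ := fun t => Real.tanh (a * z t * (k * z t ^ 2 + μ0 - s t) + b) with hT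
  -- derivative of exp (c * t)
  have hexp : ∀ (c t : ℝ), HasDerivAt (fun t => Real.exp (c * t)) (c * Real.exp (c * t)) t := by
    intro c t
    have := (Real.hasDerivAt_exp (c * t)).comp t ((hasDerivAt_id t).const_mul c)
    simpa [mul_comm, Function.comp_def] using this
  -- upper bound for z
  have hzu : ∀ t, 0 ≤ t → z t ≤ 1 / d := by
    intro t ht
    have key : ∀ t, 0 ≤ t → (z t - 1 / d) * Real.exp (d * t) ≤ 0 := by
      apply stays_nonpos (fun t => (z t - 1 / d) * Real.exp (d * t))
        (fun t => (-d * z t + T t) * Real.exp (d * t)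
          + (z t - 1 / d) * (d * Real.exp (d * t)))
      · intro t
        exact ((hz t).sub_const (1 / d)).mul (hexp d t)
      · intro t _
        have h1 : T t ≤ 1 := my_tanh_le_one _
        have h2 : (0:ℝ) < Real.exp (d * t) := Real.exp_pos _
        have : (-d * z t + T t) * Real.exp (d * t)
            + (z t - 1 / d) * (d * Real.exp (d * t))
            = (T t - 1) * Real.exp (d * t) := by
          field_simp
          ring
        rw [this]
        exact mul_nonpos_of_nonpos_of_nonneg (by linarith) h2.le
      · show (z 0 - 1 / d) * Real.exp (d * 0) ≤ 0
        have h2 : (0:ℝ) < Real.exp (d * 0) := Real.exp_pos _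
        nlinarith
    have := key t ht
    nlinarith [Real.exp_pos (d * t)]
  -- lower bound for z
  have hzl : ∀ t, 0 ≤ t → -(1 / d) ≤ z t := by
    intro t ht
    have key : ∀ t, 0 ≤ t → (-(1 / d) - z t) * Real.exp (d * t) ≤ 0 := by
      apply stays_nonpos (fun t => (-(1 / d) - z t) * Real.exp (d * t))
        (fun t => (-(-d * z t + T t)) * Real.exp (d * t)
          + (-(1 / d) - z t) * (d * Real.exp (d * t)))
      · intro t
        simpa [zero_sub, Pi.sub_def, Pi.mul_def] using ((hasDerivAt_const t (-(1 / d))).sub (hz t)).mul (hexp d t)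
      · intro t _
        have h1 : -1 ≤ T t := my_neg_one_le_tanh _
        have h2 : (0:ℝ) < Real.exp (d * t) := Real.exp_pos _
        have : (-(-d * z t + T t)) * Real.exp (d * t)
            + (-(1 / d) - z t) * (d * Real.exp (d * t))
            = (-T t - 1) * Real.exp (d * t) := by
          field_simp
          ring
        rw [this]
        exact mul_nonpos_of_nonpos_of_nonneg (by linarith) h2.le
      · show (-(1 / d) - z 0) * Real.exp (d * 0) ≤ 0
        have h2 : (0:ℝ) < Real.exp (d * 0) := Real.exp_pos _
        nlinarith
    have := key t ht
    nlinarith [Real.exp_pos (d * t)]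
  -- lower bound for s
  have hsl : ∀ t, 0 ≤ t → -1 ≤ s t := by
    intro t ht
    have key : ∀ t, 0 ≤ t → (-1 - s t) * Real.exp (ε * t) ≤ 0 := by
      apply stays_nonpos (fun t => (-1 - s t) * Real.exp (ε * t))
        (fun t => (-(ε * (-s t + ks * z t ^ 4))) * Real.exp (ε * t)
          + (-1 - s t) * (ε * Real.exp (ε * t)))
      · intro t
        simpa [zero_sub, Pi.sub_def, Pi.mul_def] using ((hasDerivAt_const t (-1 : ℝ)).sub (hs t)).mul (hexp ε t)
      · intro t _
        have h2 : (0:ℝ) < Real.exp (ε * t) := Real.exp_pos _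
        have h3 : 0 ≤ z t ^ 4 := by positivity
        have : (-(ε * (-s t + ks * z t ^ 4))) * Real.exp (ε * t)
            + (-1 - s t) * (ε * Real.exp (ε * t))
            = (-ε * (ks * z t ^ 4) - ε) * Real.exp (ε * t) := by ring
        rw [this]
        apply mul_nonpos_of_nonpos_of_nonneg _ h2.le
        nlinarith [mul_nonneg (mul_nonneg hε.le hks.le) h3]
      · show (-1 - s 0) * Real.exp (ε * 0) ≤ 0
        have h2 : (0:ℝ) < Real.exp (ε * 0) := Real.exp_pos _
        nlinarith
    have := key t ht
    nlinarith [Real.exp_pos (ε * t)]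
  -- upper bound for s
  have hz4 : ∀ t, 0 ≤ t → z t ^ 4 ≤ 1 / d ^ 4 := by
    intro t ht
    have h1 := hzu t ht
    have h2 := hzl t ht
    have habs : |z t| ≤ 1 / d := abs_le.2 ⟨by linarith, h1⟩
    have : |z t| ^ 4 ≤ (1 / d) ^ 4 := pow_le_pow_left₀ (abs_nonneg _) habs 4
    calc z t ^ 4 = |z t| ^ 4 := by rw [← abs_pow, abs_of_nonneg (by positivity)]
      _ ≤ (1 / d) ^ 4 := this
      _ = 1 / d ^ 4 := by rw [div_pow, one_pow]
  have hsu : ∀ t, 0 ≤ t → s t ≤ ks / d ^ 4 := by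
    intro t ht
    have key : ∀ t, 0 ≤ t → (s t - ks / d ^ 4) * Real.exp (ε * t) ≤ 0 := by
      apply stays_nonpos (fun t => (s t - ks / d ^ 4) * Real.exp (ε * t))
        (fun t => (ε * (-s t + ks * z t ^ 4)) * Real.exp (ε * t)
          + (s t - ks / d ^ 4) * (ε * Real.exp (ε * t)))
      · intro t
        exact ((hs t).sub_const _).mul (hexp ε t)
      · intro t ht'
        have h2 : (0:ℝ) < Real.exp (ε * t) := Real.exp_pos _
        have h4 := hz4 t ht'
        have : (ε * (-s t + ks * z t ^ 4)) * Real.exp (ε * t)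
            + (s t - ks / d ^ 4) * (ε * Real.exp (ε * t))
            = ε * (ks * z t ^ 4 - ks / d ^ 4) * Real.exp (ε * t) := by ring
        rw [this]
        apply mul_nonpos_of_nonpos_of_nonneg _ h2.le
        have : ks * z t ^ 4 ≤ ks * (1 / d ^ 4) := by nlinarith
        have heq : ks * (1 / d ^ 4) = ks / d ^ 4 := by ring
        nlinarith
      · show (s 0 - ks / d ^ 4) * Real.exp (ε * 0) ≤ 0
        have h2 : (0:ℝ) < Real.exp (ε * 0) := Real.exp_pos _
        nlinarith
    have := key t ht
    nlinarith [Real.exp_pos (ε * t)]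
  intro t ht
  exact ⟨⟨hzl t ht, hzu t ht⟩, hsl t ht, hsu t ht⟩
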